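/- Suppose u and v are solutions of problem (H) with Wronskian W_n(u,v) ≠ 0 for all n. Let (h_n) be a complex sequence defined for n ∈ ℤ₀, extended by h₀ = h₁ = 0. Define x_n = −∑_{s=n}^{0} (u_n v_s − u_s v_n)/W_s(u,v) · h_s for n ≤ 0 and x_n = ∑_{s=1}^{n} (u_n v_s − u_s v_n)/W_s(u,v) · h_s for n ≥ 1. Then x satisfies −Δ²x_{n−1} + p_n x_n = h_n for n ∈ ℤ₀ together with x_{−1} = Δx_{−1} = 0 and x₁ = Δx₁ = 0 (in particular x satisfies the impulse conditions), and a sequence y = (y_n)_{n∈ℤ} satisfies −Δ²y_{n−1} + p_n y_n = h_n for n ∈ ℤ₀ together with y_{−1} = d₁ y₁, Δy_{−1} = d₂ Δy₁ if and only if y_n = c₁ u_n + c₂ v_n + x_n for some complex constants c₁, c₂. -/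

import Mathlib

/- Problem (H): the second order linear difference equation
   −Δ²y_{n−1} + p_n y_n = 0 on ℤ₀ = ℤ \ {0,1}, with impulse conditions
   y_{−1} = d₁ y₁ and Δy_{−1} = d₂ Δy₁, for a sequence y : ℤ → ℂ. -/
def IsSolH (p : ℤ → ℂ) (d₁ d₂ : ℂ) (y : ℤ → ℂ) : Prop :=
  (∀ n : ℤ, n ≠ 0 → n ≠ 1 → -(y (n + 1) - 2 * y n + y (n - 1)) + p n * y n = 0) ∧
  y (-1) = d₁ * y 1 ∧
  y 0 - y (-1) = d₂ * (y 2 - y 1)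

/-- The Wronskian W_n(y,z) = y_n z_{n+1} − y_{n+1} z_n. -/
def Wr (y z : ℤ → ℂ) (n : ℤ) : ℂ := y n * z (n + 1) - y (n + 1) * z n

/-- Auxiliary: peel the bottom element off an `Icc` sum over `ℤ`. -/
lemma sum_bot (a b : ℤ) (hab : a ≤ b) (f : ℤ → ℂ) :
    ∑ s ∈ Finset.Icc a b, f s = f a + ∑ s ∈ Finset.Icc (a + 1) b, f s := by
  have : Finset.Icc a b = insert a (Finset.Icc (a + 1) b) := by
    ext x; simp only [Finset.mem_insert, Finset.mem_Icc]; omega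
  rw [this, Finset.sum_insert (by simp only [Finset.mem_Icc]; omega)]

/-- Auxiliary: peel the top element off an `Icc` sum over `ℤ`. -/
lemma sum_top (a b : ℤ) (hab : a ≤ b) (f : ℤ → ℂ) :
    ∑ s ∈ Finset.Icc a b, f s = (∑ s ∈ Finset.Icc a (b - 1), f s) + f b := by
  have : Finset.Icc a b = insert b (Finset.Icc a (b - 1)) := by
    ext x; simp only [Finset.mem_insert, Finset.mem_Icc]; omega
  rw [this, Finset.sum_insert (by simp only [Finset.mem_Icc]; omega), add_comm]

/-- The Cauchy kernel summand. -/
noncomputable def Fk (u v h : ℤ → ℂ) (m s : ℤ) : ℂ := (u m * v s - u s * v m) / Wr u v s * h s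

lemma Fk_diag (u v h : ℤ → ℂ) (s : ℤ) : Fk u v h s s = 0 := by
  simp [Fk]

lemma Wstep (p : ℤ → ℂ) (d₁ d₂ : ℂ) (u v : ℤ → ℂ)
    (hu : IsSolH p d₁ d₂ u) (hv : IsSolH p d₁ d₂ v)
    (n : ℤ) (hn0 : n ≠ 0) (hn1 : n ≠ 1) : Wr u v (n - 1) = Wr u v n := by
  have e1 := hu.1 n hn0 hn1
  have e2 := hv.1 n hn0 hn1
  simp only [Wr]
  rw [show n - 1 + 1 = n from by ring]
  linear_combination u n * e2 - v n * e1

lemma Fk_super (u v h : ℤ → ℂ) (hW : ∀ n : ℤ, Wr u v n ≠ 0) (n : ℤ) :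
    Fk u v h (n + 1) n = -h n := by
  have : u (n + 1) * v n - u n * v (n + 1) = -(Wr u v n) := by rw [Wr]; ring
  rw [Fk, this, neg_div, div_self (hW n)]
  ring

lemma Fk_sub (p : ℤ → ℂ) (d₁ d₂ : ℂ) (u v h : ℤ → ℂ)
    (hu : IsSolH p d₁ d₂ u) (hv : IsSolH p d₁ d₂ v)
    (hW : ∀ n : ℤ, Wr u v n ≠ 0) (n : ℤ) (hn0 : n ≠ 0) (hn1 : n ≠ 1) :
    Fk u v h (n - 1) n = h n := by
  have hw : u (n - 1) * v n - u n * v (n - 1) = Wr u v n := by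
    rw [← Wstep p d₁ d₂ u v hu hv n hn0 hn1, Wr, show n - 1 + 1 = n from by ring]
  rw [Fk, hw, div_self (hW n)]
  ring

lemma Fk_key (p : ℤ → ℂ) (d₁ d₂ : ℂ) (u v h : ℤ → ℂ)
    (hu : IsSolH p d₁ d₂ u) (hv : IsSolH p d₁ d₂ v)
    (n : ℤ) (hn0 : n ≠ 0) (hn1 : n ≠ 1) (s : ℤ) :
    -(Fk u v h (n + 1) s - 2 * Fk u v h n s + Fk u v h (n - 1) s)
      + p n * Fk u v h n s = 0 := by
  have a := hu.1 n hn0 hn1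
  have b := hv.1 n hn0 hn1
  have expand : ∀ m : ℤ, Fk u v h m s = (u m * v s - u s * v m) * (h s / Wr u v s) := by
    intro m; rw [Fk]; ring
  rw [expand, expand, expand]
  linear_combination (v s * (h s / Wr u v s)) * a - (u s * (h s / Wr u v s)) * b

/-- Any solution of the homogeneous impulse problem vanishing at 1, 2 (hence at −1, 0)
vanishes identically. -/
lemma homZero (p : ℤ → ℂ) (w : ℤ → ℂ)
    (heq : ∀ n : ℤ, n ≠ 0 → n ≠ 1 → -(w (n + 1) - 2 * w n + w (n - 1)) + p n * w n = 0)
    (h1 : w 1 = 0) (h2 : w 2 = 0) (hm1 : w (-1) = 0) (h0 : w 0 = 0) :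
    ∀ n : ℤ, w n = 0 := by
  have pos : ∀ k : ℕ, w (1 + k) = 0 ∧ w (2 + k) = 0 := by
    intro k; induction k with
    | zero => simpa using ⟨h1, h2⟩
    | succ k ih =>
      have e := heq (2 + k) (by omega) (by omega)
      have i1 : w (2 + (k : ℤ) - 1) = 0 := by
        rw [show (2 : ℤ) + k - 1 = 1 + k from by ring]; exact ih.1
      have i2 : w (2 + (k : ℤ)) = 0 := ih.2
      constructor
      · rw [show (1 : ℤ) + ((k + 1 : ℕ) : ℤ) = 2 + k from by push_cast; ring]
        exact ih.2
      · rw [show (2 : ℤ) + ((k + 1 : ℕ) : ℤ) = (2 + k) + 1 from by push_cast; ring]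
        linear_combination -e + 2 * i2 - i1 + p (2 + (k : ℤ)) * i2
  have neg : ∀ k : ℕ, w (-(k : ℤ)) = 0 ∧ w (-(k : ℤ) - 1) = 0 := by
    intro k; induction k with
    | zero => simpa using ⟨h0, hm1⟩
    | succ k ih =>
      have e := heq (-(k : ℤ) - 1) (by omega) (by omega)
      have i1 : w (-(k : ℤ) - 1 + 1) = 0 := by
        rw [show -(k : ℤ) - 1 + 1 = -(k : ℤ) from by ring]; exact ih.1
      have i2 : w (-(k : ℤ) - 1) = 0 := ih.2
      constructor
      · rw [show -(((k + 1 : ℕ) : ℤ)) = -(k : ℤ) - 1 from by push_cast; ring]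
        exact ih.2
      · rw [show -(((k + 1 : ℕ) : ℤ)) - 1 = (-(k : ℤ) - 1) - 1 from by push_cast; ring]
        linear_combination -e - i1 + 2 * i2 + p (-(k : ℤ) - 1) * i2
  intro n
  rcases le_or_gt 1 n with hn | hn
  · have := (pos (n - 1).toNat).1
    rwa [show (1 : ℤ) + ((n - 1).toNat : ℤ) = n from by omega] at this
  · have := (neg (-n).toNat).1
    rwa [show -(((-n).toNat : ℤ)) = n from by omega] at this

/-- variation of constants for the nonhomogeneous problem with impulse
conditions. With u, v a fundamental system of (H) and h extended by h₀ = h₁ = 0, the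
particular solution x given by the stated sums satisfies the nonhomogeneous equation
and x_{−1} = Δx_{−1} = x₁ = Δx₁ = 0, and the general solution of the nonhomogeneous
problem is y = c₁ u + c₂ v + x. -/
theorem variation_of_constants (p : ℤ → ℂ) (d₁ d₂ : ℂ) (hd₁ : d₁ ≠ 0) (hd₂ : d₂ ≠ 0)
    (u v : ℤ → ℂ) (hu : IsSolH p d₁ d₂ u) (hv : IsSolH p d₁ d₂ v)
    (hW : ∀ n : ℤ, Wr u v n ≠ 0)
    (h : ℤ → ℂ) (h0 : h 0 = 0) (h1 : h 1 = 0)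
    (x : ℤ → ℂ)
    (hxneg : ∀ n : ℤ, n ≤ 0 →
      x n = -∑ s ∈ Finset.Icc n 0, (u n * v s - u s * v n) / Wr u v s * h s)
    (hxpos : ∀ n : ℤ, 1 ≤ n →
      x n = ∑ s ∈ Finset.Icc 1 n, (u n * v s - u s * v n) / Wr u v s * h s) :
    ((∀ n : ℤ, n ≠ 0 → n ≠ 1 → -(x (n + 1) - 2 * x n + x (n - 1)) + p n * x n = h n) ∧
      x (-1) = 0 ∧ x 0 - x (-1) = 0 ∧ x 1 = 0 ∧ x 2 - x 1 = 0) ∧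
    (∀ y : ℤ → ℂ,
      ((∀ n : ℤ, n ≠ 0 → n ≠ 1 → -(y (n + 1) - 2 * y n + y (n - 1)) + p n * y n = h n) ∧
        y (-1) = d₁ * y 1 ∧ y 0 - y (-1) = d₂ * (y 2 - y 1)) ↔
      ∃ c₁ c₂ : ℂ, ∀ n : ℤ, y n = c₁ * u n + c₂ * v n + x n) := by
  have hxn : ∀ n : ℤ, n ≤ 0 → x n = -∑ s ∈ Finset.Icc n 0, Fk u v h n s := by
    intro n hn; simpa [Fk] using hxneg n hn
  have hxp : ∀ n : ℤ, 1 ≤ n → x n = ∑ s ∈ Finset.Icc 1 n, Fk u v h n s := by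
    intro n hn; simpa [Fk] using hxpos n hn
  have hx1 : x 1 = 0 := by
    rw [hxp 1 le_rfl]; simp [Fk, h1]
  have hx2 : x 2 = 0 := by
    rw [hxp 2 (by norm_num), sum_bot 1 2 (by norm_num)]
    norm_num [Fk, h1]
  have hx0 : x 0 = 0 := by
    rw [hxn 0 le_rfl]; simp [Fk, h0]
  have hxm1 : x (-1) = 0 := by
    rw [hxn (-1) (by norm_num), sum_bot (-1) 0 (by norm_num)]
    norm_num [Fk, h0]
  have hxeq : ∀ n : ℤ, n ≠ 0 → n ≠ 1 →
      -(x (n + 1) - 2 * x n + x (n - 1)) + p n * x n = h n := by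
    intro n hn0 hn1
    rcases lt_or_ge n 0 with hn | hn
    · -- n ≤ -1, use the negative-side formula
      have E2 : x n = -∑ s ∈ Finset.Icc n 0, Fk u v h n s := hxn n (by omega)
      have E3 : x (n - 1) = -∑ s ∈ Finset.Icc n 0, Fk u v h (n - 1) s := by
        rw [hxn (n - 1) (by omega), sum_bot (n - 1) 0 (by omega),
          Fk_diag, show n - 1 + 1 = n from by ring]
        ring
      have E1 : x (n + 1) = -∑ s ∈ Finset.Icc n 0, Fk u v h (n + 1) s - h n := by
        rw [hxn (n + 1) (by omega),
          sum_bot n 0 (by omega) (fun s => Fk u v h (n + 1) s),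
          Fk_super u v h hW n]
        ring
      have Esum : ∑ s ∈ Finset.Icc n 0,
          (Fk u v h (n + 1) s - 2 * Fk u v h n s + Fk u v h (n - 1) s)
          = ∑ s ∈ Finset.Icc n 0, p n * Fk u v h n s :=
        Finset.sum_congr rfl fun s _ => by
          linear_combination -(Fk_key p d₁ d₂ u v h hu hv n hn0 hn1 s)
      have Ed : (∑ s ∈ Finset.Icc n 0, Fk u v h (n + 1) s)
          - 2 * (∑ s ∈ Finset.Icc n 0, Fk u v h n s)
          + (∑ s ∈ Finset.Icc n 0, Fk u v h (n - 1) s)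
          = p n * ∑ s ∈ Finset.Icc n 0, Fk u v h n s := by
        simp only [Finset.sum_add_distrib, Finset.sum_sub_distrib, ← Finset.mul_sum] at Esum
        linear_combination Esum
      rw [E1, E2, E3]
      linear_combination Ed
    · -- n ≥ 2, use the positive-side formula
      have hn2 : 2 ≤ n := by omega
      have E2 : x n = ∑ s ∈ Finset.Icc 1 n, Fk u v h n s := hxp n (by omega)
      have E1 : x (n + 1) = ∑ s ∈ Finset.Icc 1 n, Fk u v h (n + 1) s := by
        rw [hxp (n + 1) (by omega), sum_top 1 (n + 1) (by omega),
          show n + 1 - 1 = n from by ring, Fk_diag]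
        ring
      have E3 : x (n - 1) = (∑ s ∈ Finset.Icc 1 n, Fk u v h (n - 1) s) - h n := by
        rw [hxp (n - 1) (by omega),
          sum_top 1 n (by omega) (fun s => Fk u v h (n - 1) s),
          Fk_sub p d₁ d₂ u v h hu hv hW n hn0 hn1]
        ring
      have Esum : ∑ s ∈ Finset.Icc 1 n,
          (Fk u v h (n + 1) s - 2 * Fk u v h n s + Fk u v h (n - 1) s)
          = ∑ s ∈ Finset.Icc 1 n, p n * Fk u v h n s :=
        Finset.sum_congr rfl fun s _ => by
          linear_combination -(Fk_key p d₁ d₂ u v h hu hv n hn0 hn1 s)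
      have Ed : (∑ s ∈ Finset.Icc 1 n, Fk u v h (n + 1) s)
          - 2 * (∑ s ∈ Finset.Icc 1 n, Fk u v h n s)
          + (∑ s ∈ Finset.Icc 1 n, Fk u v h (n - 1) s)
          = p n * ∑ s ∈ Finset.Icc 1 n, Fk u v h n s := by
        simp only [Finset.sum_add_distrib, Finset.sum_sub_distrib, ← Finset.mul_sum] at Esum
        linear_combination Esum
      rw [E1, E2, E3]
      linear_combination -Ed
  refine ⟨⟨hxeq, hxm1, by rw [hx0, hxm1]; ring, hx1, by rw [hx2, hx1]; ring⟩, ?_⟩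
  intro y
  constructor
  · rintro ⟨hyeq, hyi1, hyi2⟩
    have hWr1 : Wr u v 1 = u 1 * v 2 - u 2 * v 1 := by rw [Wr]; norm_num
    set c₁ : ℂ := ((y 1 - x 1) * v 2 - (y 2 - x 2) * v 1) / Wr u v 1 with hc₁
    set c₂ : ℂ := (u 1 * (y 2 - x 2) - u 2 * (y 1 - x 1)) / Wr u v 1 with hc₂
    set w : ℤ → ℂ := fun n => y n - x n - c₁ * u n - c₂ * v n with hw
    have hz : u 1 * v 2 - u 2 * v 1 ≠ 0 := by rw [← hWr1]; exact hW 1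
    have w1 : w 1 = 0 := by
      simp only [hw, hc₁, hc₂, hWr1]
      field_simp
      have hz' : v 2 * u 1 - v 1 * u 2 ≠ 0 := by intro h; exact hz (by linear_combination h)
      linear_combination (-(y 1 - x 1)) * mul_inv_cancel₀ hz'
    have w2 : w 2 = 0 := by
      simp only [hw, hc₂, hc₁, hWr1]
      field_simp
      have hz' : v 2 * u 1 - v 1 * u 2 ≠ 0 := by intro h; exact hz (by linear_combination h)
      linear_combination (-(y 2 - x 2)) * mul_inv_cancel₀ hz'
    have wm1 : w (-1) = 0 := by
      have : w (-1) = d₁ * w 1 := by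
        simp only [hw]
        rw [hyi1, hu.2.1, hv.2.1, hxm1, hx1]
        ring
      rw [this, w1, mul_zero]
    have w0 : w 0 = 0 := by
      have hdiff : w 0 - w (-1) = d₂ * (w 2 - w 1) := by
        simp only [hw]
        linear_combination hyi2 - c₁ * hu.2.2 - c₂ * hv.2.2 + hxm1 - hx0 + d₂ * hx2 - d₂ * hx1
      have := hdiff
      rw [wm1, w1, w2] at this
      linear_combination this
    have weq : ∀ n : ℤ, n ≠ 0 → n ≠ 1 →
        -(w (n + 1) - 2 * w n + w (n - 1)) + p n * w n = 0 := by
      intro n a b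
      simp only [hw]
      linear_combination hyeq n a b - hxeq n a b - c₁ * hu.1 n a b - c₂ * hv.1 n a b
    have wzero := homZero p w weq w1 w2 wm1 w0
    refine ⟨c₁, c₂, fun n => ?_⟩
    have := wzero n
    simp only [hw] at this
    linear_combination this
  · rintro ⟨c₁, c₂, hy⟩
    refine ⟨fun n a b => ?_, ?_, ?_⟩
    · rw [hy (n + 1), hy n, hy (n - 1)]
      linear_combination c₁ * hu.1 n a b + c₂ * hv.1 n a b + hxeq n a b
    · rw [hy (-1), hy 1, hxm1, hx1, hu.2.1, hv.2.1]; ring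
    · rw [hy 0, hy (-1), hy 2, hy 1]
      linear_combination c₁ * hu.2.2 + c₂ * hv.2.2 + hx0 - hxm1 - d₂ * hx2 + d₂ * hx1
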